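/- Let m be a natural number and let p be a real number with 0 ≤ p ≤ 1. Then ∑_{k = ⌈m/2⌉}^{m} (m choose k) · p^k · (1 − p)^(m − k) ≤ (4p)^(m/2), where the exponent m/2 is taken as a real exponent. (This is the binomial tail bound used to estimate the probability that at least half of m independent checksum tests, each erring with probability p, simultaneously fail.) -/

import Mathlib

theorem binomial_tail_bound (m : ℕ) (p : ℝ) (hp0 : 0 ≤ p) (hp1 : p ≤ 1) :
    ∑ k ∈ (Finset.range (m + 1)).filter (fun k => m ≤ 2 * k),
        (m.choose k : ℝ) * p ^ k * (1 - p) ^ (m - k)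
      ≤ (4 * p) ^ ((m : ℝ) / 2) := by
  rcases Nat.eq_zero_or_pos m with hm | hm
  · subst hm
    norm_num
  by_cases hp : p = 0
  · subst hp
    rw [show (4:ℝ) * 0 = 0 by ring, Real.zero_rpow (by positivity)]
    apply le_of_eq
    apply Finset.sum_eq_zero
    intro k hk
    simp only [Finset.mem_filter, Finset.mem_range] at hk
    have hk1 : 1 ≤ k := by omega
    rw [zero_pow (by omega)]
    ring
  have hp' : 0 < p := lt_of_le_of_ne hp0 (Ne.symm hp)
  have key : ∀ k ∈ (Finset.range (m + 1)).filter (fun k => m ≤ 2 * k),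
      (m.choose k : ℝ) * p ^ k * (1 - p) ^ (m - k)
        ≤ (m.choose k : ℝ) * p ^ ((m : ℝ) / 2) := by
    intro k hk
    simp only [Finset.mem_filter, Finset.mem_range] at hk
    have h1 : p ^ k ≤ p ^ ((m : ℝ) / 2) := by
      rw [← Real.rpow_natCast p k]
      apply Real.rpow_le_rpow_of_exponent_ge hp' hp1
      have : (m : ℝ) ≤ 2 * k := by exact_mod_cast hk.2
      linarith
    have h2 : (1 - p) ^ (m - k) ≤ 1 :=
      pow_le_one₀ (by linarith) (by linarith)
    calc (m.choose k : ℝ) * p ^ k * (1 - p) ^ (m - k)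
        ≤ (m.choose k : ℝ) * p ^ k * 1 := by
          apply mul_le_mul_of_nonneg_left h2 (by positivity)
      _ = (m.choose k : ℝ) * p ^ k := mul_one _
      _ ≤ (m.choose k : ℝ) * p ^ ((m : ℝ) / 2) :=
          mul_le_mul_of_nonneg_left h1 (by positivity)
  calc ∑ k ∈ (Finset.range (m + 1)).filter (fun k => m ≤ 2 * k),
        (m.choose k : ℝ) * p ^ k * (1 - p) ^ (m - k)
      ≤ ∑ k ∈ (Finset.range (m + 1)).filter (fun k => m ≤ 2 * k),
        (m.choose k : ℝ) * p ^ ((m : ℝ) / 2) := Finset.sum_le_sum key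
    _ ≤ ∑ k ∈ Finset.range (m + 1), (m.choose k : ℝ) * p ^ ((m : ℝ) / 2) := by
        apply Finset.sum_le_sum_of_subset_of_nonneg (Finset.filter_subset _ _)
        intro k _ _
        positivity
    _ = (2 : ℝ) ^ m * p ^ ((m : ℝ) / 2) := by
        rw [← Finset.sum_mul]
        congr 1
        rw [← Nat.cast_sum, Nat.sum_range_choose]
        push_cast
        ring
    _ = (4 * p) ^ ((m : ℝ) / 2) := by
        rw [Real.mul_rpow (by norm_num) hp0]
        congr 1
        have h4 : ((4:ℝ)) ^ ((m:ℝ)/2) = ((2:ℝ)^(2:ℕ)) ^ ((m:ℝ)/2) := by norm_num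
        rw [h4, ← Real.rpow_natCast (2:ℝ) 2, ← Real.rpow_mul (by norm_num),
          ← Real.rpow_natCast (2:ℝ) m]
        congr 1
        push_cast; ring
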